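/- Let ψ : Fin dA × Fin dB → ℂ be a unit vector. Then the supremum, over all permutations π of Fin dA × Fin dB, all phases φ : Fin dA × Fin dB → ℝ, and all unit vectors a : Fin dA → ℂ, b : Fin dB → ℂ, of |∑_{(i,j)} conj(a(i)·b(j)) · exp(i·φ(i,j)) · ψ(π(i,j))| equals the maximum over permutations π of the ℓ²→ℓ² operator norm of the real matrix (i,j) ↦ |ψ(π(i,j))|. -/

import Mathlib

/-- The ℓ²→ℓ² operator norm of a real matrix: the operator norm of the induced
continuous linear map between the corresponding Euclidean spaces (i.e. the largest
singular value). -/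
noncomputable def l2OpNormReal {m n : ℕ} (M : Matrix (Fin m) (Fin n) ℝ) : ℝ :=
  ‖LinearMap.toContinuousLinearMap (Matrix.toEuclideanLin M)‖

/-- For a bipartite pure state `ψ`, the supremum over incoherent
unitaries (permutations `π` and phases `φ`) and over product unit vectors
`(i,j) ↦ a i * b j` of the modulus of the overlap
`|∑ (i,j), conj (a i * b j) * exp(I φ (i,j)) * ψ (π (i,j))|`
equals the maximum over permutations `π` of the ℓ²→ℓ² operator norm of the
matrix of moduli `(i,j) ↦ |ψ (π (i,j))|`. -/
lemma euclid_norm_symm {n : ℕ} (y : Fin n → ℝ) :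
    ‖(WithLp.equiv 2 (Fin n → ℝ)).symm y‖ = Real.sqrt (∑ j, y j ^ 2) := by
  rw [EuclideanSpace.norm_eq]
  simp [Real.norm_eq_abs, sq_abs]

lemma normT_eq {m n : ℕ} (M : Matrix (Fin m) (Fin n) ℝ) (y : Fin n → ℝ) :
    ‖LinearMap.toContinuousLinearMap (Matrix.toEuclideanLin M)
        ((WithLp.equiv 2 (Fin n → ℝ)).symm y)‖ =
      Real.sqrt (∑ i, (M.mulVec y i) ^ 2) := by
  have : LinearMap.toContinuousLinearMap (Matrix.toEuclideanLin M)
      ((WithLp.equiv 2 (Fin n → ℝ)).symm y)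
      = (WithLp.equiv 2 (Fin m → ℝ)).symm (M.mulVec y) := rfl
  rw [this, euclid_norm_symm]

lemma bilin_le {m n : ℕ} (M : Matrix (Fin m) (Fin n) ℝ)
    (x : Fin m → ℝ) (y : Fin n → ℝ) (hx : ∑ i, x i ^ 2 = 1) (hy : ∑ j, y j ^ 2 = 1) :
    ∑ i, ∑ j, x i * (M i j * y j) ≤ l2OpNormReal M := by
  set T := LinearMap.toContinuousLinearMap (Matrix.toEuclideanLin M) with hT
  set x' : EuclideanSpace ℝ (Fin m) := (WithLp.equiv 2 _).symm x with hx'd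
  set y' : EuclideanSpace ℝ (Fin n) := (WithLp.equiv 2 _).symm y with hy'd
  have hx' : ‖x'‖ = 1 := by rw [hx'd, euclid_norm_symm, hx, Real.sqrt_one]
  have hy' : ‖y'‖ = 1 := by rw [hy'd, euclid_norm_symm, hy, Real.sqrt_one]
  have h1 : ∑ i, ∑ j, x i * (M i j * y j) = inner ℝ x' (T y') := by
    have : T y' = (WithLp.equiv 2 (Fin m → ℝ)).symm (M.mulVec y) := rfl
    rw [this, PiLp.inner_apply]
    simp [Matrix.mulVec, dotProduct, Finset.mul_sum, x']
    exact Finset.sum_congr rfl fun i _ => by rw [Finset.sum_mul]; exact Finset.sum_congr rfl fun j _ => by ring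
  rw [h1]
  calc inner ℝ x' (T y') ≤ ‖x'‖ * ‖T y'‖ := real_inner_le_norm _ _
    _ ≤ ‖x'‖ * (‖T‖ * ‖y'‖) :=
        mul_le_mul_of_nonneg_left (T.le_opNorm y') (norm_nonneg x')
    _ = l2OpNormReal M := by rw [hx', hy', l2OpNormReal]; ring

lemma exists_attain {m n : ℕ} (hm : 0 < m) (hn : 0 < n) (M : Matrix (Fin m) (Fin n) ℝ)
    (hM : ∀ i j, 0 ≤ M i j) :
    ∃ (x : Fin m → ℝ) (y : Fin n → ℝ), (∀ i, 0 ≤ x i) ∧ (∀ j, 0 ≤ y j) ∧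
      (∑ i, x i ^ 2 = 1) ∧ (∑ j, y j ^ 2 = 1) ∧
      ∑ i, ∑ j, x i * (M i j * y j) = l2OpNormReal M := by
  set T := LinearMap.toContinuousLinearMap (Matrix.toEuclideanLin M) with hTdef
  -- maximize on sphere
  have hsph : (Metric.sphere (0 : EuclideanSpace ℝ (Fin n)) 1).Nonempty := by
    refine ⟨EuclideanSpace.single ⟨0, hn⟩ 1, ?_⟩
    simp [EuclideanSpace.norm_single]
  obtain ⟨y0, hy0mem, hy0max⟩ := (isCompact_sphere (0 : EuclideanSpace ℝ (Fin n)) 1).exists_isMaxOn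
    hsph (Continuous.norm T.continuous).continuousOn
  have hy0norm : ‖y0‖ = 1 := by simpa using hy0mem
  have hTnorm : ‖T‖ = ‖T y0‖ := by
    refine le_antisymm ?_ ?_
    · refine T.opNorm_le_bound (norm_nonneg _) fun z => ?_
      rcases eq_or_ne z 0 with rfl | hz
      · simp
      · have hzn : ‖z‖ ≠ 0 := norm_ne_zero_iff.mpr hz
        have hmem : (‖z‖⁻¹ • z) ∈ Metric.sphere (0 : EuclideanSpace ℝ (Fin n)) 1 := by
          simp [norm_smul, abs_of_nonneg (inv_nonneg.mpr (norm_nonneg z)), inv_mul_cancel₀ hzn]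
        have h2 : ‖z‖⁻¹ * ‖T z‖ ≤ ‖T y0‖ := by
          simpa [norm_smul, abs_of_nonneg (inv_nonneg.mpr (norm_nonneg z))] using hy0max hmem
        have hzpos : (0:ℝ) < ‖z‖ := lt_of_le_of_ne (norm_nonneg z) (Ne.symm hzn)
        have hzi : ‖z‖ * ‖z‖⁻¹ = 1 := mul_inv_cancel₀ hzn
        nlinarith [h2, hzpos, hzi, norm_nonneg (T z)]
    · simpa [hy0norm] using T.le_opNorm y0
  -- absolute values of y0
  set yf : Fin n → ℝ := fun j => |WithLp.equiv 2 (Fin n → ℝ) y0 j| with hyf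
  have hyfnn : ∀ j, 0 ≤ yf j := fun j => abs_nonneg _
  have hy0eq : y0 = (WithLp.equiv 2 (Fin n → ℝ)).symm (WithLp.equiv 2 (Fin n → ℝ) y0) := rfl
  have hyfsum : ∑ j, yf j ^ 2 = 1 := by
    have h := hy0norm
    rw [hy0eq, euclid_norm_symm] at h
    have := Real.sqrt_eq_one.mp h
    simpa [hyf, sq_abs] using this
  set g : Fin m → ℝ := M.mulVec yf with hg
  have hgnn : ∀ i, 0 ≤ g i := by
    intro i
    simp only [hg, Matrix.mulVec, dotProduct]
    exact Finset.sum_nonneg fun j _ => mul_nonneg (hM i j) (hyfnn j)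
  have hTyf : ‖T ((WithLp.equiv 2 (Fin n → ℝ)).symm yf)‖ = Real.sqrt (∑ i, g i ^ 2) :=
    normT_eq M yf
  have hge : Real.sqrt (∑ i, g i ^ 2) = ‖T‖ := by
    refine le_antisymm ?_ ?_
    · rw [← hTyf]
      have := T.le_opNorm ((WithLp.equiv 2 (Fin n → ℝ)).symm yf)
      rw [euclid_norm_symm, hyfsum, Real.sqrt_one, mul_one] at this
      exact this
    · rw [hTnorm, hy0eq, normT_eq]
      apply Real.sqrt_le_sqrt
      apply Finset.sum_le_sum
      intro i _
      have habs : |M.mulVec (WithLp.equiv 2 (Fin n → ℝ) y0) i| ≤ g i := by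
        rw [hg, Matrix.mulVec, Matrix.mulVec]
        refine (Finset.abs_sum_le_sum_abs _ _).trans ?_
        apply Finset.sum_le_sum
        intro j _
        rw [abs_mul, abs_of_nonneg (hM i j)]
      rw [← sq_abs (M.mulVec _ i)]
      exact pow_le_pow_left₀ (abs_nonneg _) habs 2
  have hNT : l2OpNormReal M = ‖T‖ := rfl
  have hsumg0 : (0:ℝ) ≤ ∑ i, g i ^ 2 := Finset.sum_nonneg fun i _ => sq_nonneg _
  have hsum2 : ∑ i, g i ^ 2 = ‖T‖ ^ 2 := by
    rw [← Real.sq_sqrt hsumg0, hge]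
  have hrw : ∀ x : Fin m → ℝ, ∑ i, ∑ j, x i * (M i j * yf j) = ∑ i, x i * g i := by
    intro x
    refine Finset.sum_congr rfl fun i _ => ?_
    simp [hg, Matrix.mulVec, dotProduct, Finset.mul_sum]
  rcases eq_or_ne ‖T‖ 0 with hN | hN
  · have hg0 : ∀ i, g i = 0 := by
      intro i
      have h0 : ∑ i, g i ^ 2 = 0 := by rw [hsum2, hN]; ring
      have := (Finset.sum_eq_zero_iff_of_nonneg (fun i _ => sq_nonneg (g i))).mp h0 i
        (Finset.mem_univ i)
      exact (pow_eq_zero_iff two_ne_zero).mp this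
    refine ⟨fun i => if i = ⟨0, hm⟩ then 1 else 0, yf, ?_, hyfnn, ?_, hyfsum, ?_⟩
    · intro i; dsimp only; split <;> norm_num
    · simp
    · rw [hrw, hNT, hN]
      refine Finset.sum_eq_zero fun i _ => by rw [hg0 i, mul_zero]
  · have hNpos : (0:ℝ) < ‖T‖ := lt_of_le_of_ne (norm_nonneg T) (Ne.symm hN)
    refine ⟨fun i => g i / ‖T‖, yf, fun i => div_nonneg (hgnn i) hNpos.le, hyfnn, ?_, hyfsum, ?_⟩
    · have : ∑ i, (g i / ‖T‖) ^ 2 = (∑ i, g i ^ 2) / ‖T‖ ^ 2 := by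
        rw [Finset.sum_div]
        exact Finset.sum_congr rfl fun i _ => div_pow _ _ _
      rw [this, hsum2, div_self (pow_ne_zero 2 hN)]
    · rw [hrw, hNT]
      have : ∑ i, g i / ‖T‖ * g i = (∑ i, g i ^ 2) / ‖T‖ := by
        rw [Finset.sum_div]
        refine Finset.sum_congr rfl fun i _ => by ring
      rw [this, hsum2, sq, mul_div_assoc, div_self hN, mul_one]

theorem sSup_overlap_eq_iSup_opNorm_abs_matrix
    {dA dB : ℕ} (ψ : Fin dA × Fin dB → ℂ)
    (hψ : ∑ p : Fin dA × Fin dB, ‖ψ p‖ ^ 2 = 1) :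
    sSup {r : ℝ | ∃ (π : Equiv.Perm (Fin dA × Fin dB)) (φ : Fin dA × Fin dB → ℝ)
        (a : Fin dA → ℂ) (b : Fin dB → ℂ),
        (∑ i, ‖a i‖ ^ 2 = 1) ∧ (∑ j, ‖b j‖ ^ 2 = 1) ∧
        r = ‖(∑ p : Fin dA × Fin dB,
          (starRingEnd ℂ) (a p.1 * b p.2) * Complex.exp ((φ p : ℂ) * Complex.I) * ψ (π p))‖} =
      ⨆ π : Equiv.Perm (Fin dA × Fin dB),
        l2OpNormReal (Matrix.of fun i j => ‖ψ (π (i, j))‖) := by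
  classical
  set f : Equiv.Perm (Fin dA × Fin dB) → ℝ := fun π =>
    l2OpNormReal (Matrix.of fun i j => ‖ψ (π (i, j))‖) with hf
  have hne : Nonempty (Fin dA × Fin dB) := by
    by_contra h
    rw [not_nonempty_iff] at h
    rw [Finset.univ_eq_empty, Finset.sum_empty] at hψ
    norm_num at hψ
  have hdA : 0 < dA := Fin.pos_iff_nonempty.mpr ⟨(Classical.arbitrary (Fin dA × Fin dB)).1⟩
  have hdB : 0 < dB := Fin.pos_iff_nonempty.mpr ⟨(Classical.arbitrary (Fin dA × Fin dB)).2⟩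
  have hbddf : BddAbove (Set.range f) := Set.Finite.bddAbove (Set.finite_range f)
  have hfnn : ∀ π, 0 ≤ f π := fun π => norm_nonneg _
  -- each value f π is attained, so it belongs to the set
  have hmem : ∀ π : Equiv.Perm (Fin dA × Fin dB), ∃ (π' : Equiv.Perm (Fin dA × Fin dB))
      (φ : Fin dA × Fin dB → ℝ) (a : Fin dA → ℂ) (b : Fin dB → ℂ),
      (∑ i, ‖a i‖ ^ 2 = 1) ∧ (∑ j, ‖b j‖ ^ 2 = 1) ∧
      f π = ‖(∑ p : Fin dA × Fin dB,
        (starRingEnd ℂ) (a p.1 * b p.2) * Complex.exp ((φ p : ℂ) * Complex.I) * ψ (π' p))‖ := by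
    intro π
    obtain ⟨x, y, hxnn, hynn, hx1, hy1, hxy⟩ := exists_attain hdA hdB
      (Matrix.of fun i j => ‖ψ (π (i, j))‖) (fun i j => norm_nonneg (ψ (π (i, j))))
    refine ⟨π, fun p => -(Complex.arg (ψ (π p))), fun i => (x i : ℂ), fun j => (y j : ℂ),
      ?_, ?_, ?_⟩
    · simpa [Complex.norm_real, Real.norm_eq_abs, sq_abs] using hx1
    · simpa [Complex.norm_real, Real.norm_eq_abs, sq_abs] using hy1
    · have hterm : ∀ p : Fin dA × Fin dB,
          (starRingEnd ℂ) ((x p.1 : ℂ) * (y p.2 : ℂ)) *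
            Complex.exp (((-(Complex.arg (ψ (π p))) : ℝ) : ℂ) * Complex.I) * ψ (π p)
            = ((x p.1 * y p.2 * ‖ψ (π p)‖ : ℝ) : ℂ) := by
        intro p
        have hz := Complex.norm_mul_exp_arg_mul_I (ψ (π p))
        rw [← Complex.ofReal_mul, Complex.conj_ofReal]
        calc (↑(x p.1 * y p.2) : ℂ) * Complex.exp (↑(-(ψ (π p)).arg) * Complex.I) * ψ (π p)
            = ↑(x p.1 * y p.2) * (Complex.exp (↑(-(ψ (π p)).arg) * Complex.I) *
              ((‖ψ (π p)‖ : ℂ) * Complex.exp (((ψ (π p)).arg : ℂ) * Complex.I))) := by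
              rw [hz]; ring
          _ = ↑(x p.1 * y p.2) * ((‖ψ (π p)‖ : ℂ) *
              Complex.exp (↑(-(ψ (π p)).arg) * Complex.I + ((ψ (π p)).arg : ℂ) * Complex.I)) := by
              rw [Complex.exp_add]; ring
          _ = ↑(x p.1 * y p.2 * ‖ψ (π p)‖) := by
              push_cast
              rw [show -((ψ (π p)).arg : ℂ) * Complex.I + ((ψ (π p)).arg : ℂ) * Complex.I = 0
                by ring, Complex.exp_zero]
              ring
      have hsum : (∑ p : Fin dA × Fin dB,
          (starRingEnd ℂ) ((x p.1 : ℂ) * (y p.2 : ℂ)) *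
            Complex.exp (((-(Complex.arg (ψ (π p))) : ℝ) : ℂ) * Complex.I) * ψ (π p))
          = ((∑ p : Fin dA × Fin dB, x p.1 * y p.2 * ‖ψ (π p)‖ : ℝ) : ℂ) := by
        rw [Complex.ofReal_sum]
        exact Finset.sum_congr rfl fun p _ => hterm p
      rw [hsum, Complex.norm_real, Real.norm_eq_abs, abs_of_nonneg (Finset.sum_nonneg fun p _ =>
        mul_nonneg (mul_nonneg (hxnn p.1) (hynn p.2)) (norm_nonneg _))]
      rw [hf]
      dsimp only
      rw [← hxy, Fintype.sum_prod_type]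
      refine Finset.sum_congr rfl fun i _ => Finset.sum_congr rfl fun j _ => ?_
      rw [Matrix.of_apply]
      ring
  -- upper bound
  have hub : ∀ r ∈ {r : ℝ | ∃ (π : Equiv.Perm (Fin dA × Fin dB)) (φ : Fin dA × Fin dB → ℝ)
      (a : Fin dA → ℂ) (b : Fin dB → ℂ),
      (∑ i, ‖a i‖ ^ 2 = 1) ∧ (∑ j, ‖b j‖ ^ 2 = 1) ∧
      r = ‖(∑ p : Fin dA × Fin dB,
        (starRingEnd ℂ) (a p.1 * b p.2) * Complex.exp ((φ p : ℂ) * Complex.I) * ψ (π p))‖},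
      r ≤ ⨆ π, f π := by
    rintro r ⟨π, φ, a, b, ha, hb, rfl⟩
    have h1 : ‖(∑ p : Fin dA × Fin dB,
        (starRingEnd ℂ) (a p.1 * b p.2) * Complex.exp ((φ p : ℂ) * Complex.I) * ψ (π p))‖
        ≤ ∑ i, ∑ j, ‖a i‖ *
          ((Matrix.of fun i j => ‖ψ (π (i, j))‖) i j * ‖b j‖) := by
      refine (norm_sum_le _ _).trans ?_
      rw [Fintype.sum_prod_type]
      refine le_of_eq (Finset.sum_congr rfl fun i _ => Finset.sum_congr rfl fun j _ => ?_)
      simp only [map_mul, norm_mul, Complex.norm_conj, Complex.norm_exp_ofReal_mul_I, Matrix.of_apply]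
      ring
    exact (h1.trans (bilin_le _ _ _ ha hb)).trans (le_ciSup hbddf π)
  refine le_antisymm (Real.sSup_le hub ((hfnn 1).trans (le_ciSup hbddf 1))) ?_
  exact ciSup_le fun π => le_csSup ⟨⨆ π, f π, hub⟩ (hmem π)
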